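/- Let n ∈ ℕ, let a = (a_1, ..., a_n) : I → ℝ^n be continuous, and let f : I → ℝ^n be a fundamental system of solutions of y^{(n)} = a_1 y^{(n-1)} + ... + a_n y. Then for every j ∈ {0, ..., n−1}, one has on I: W_f^{(n, n−1, ..., j+1, j−1, ..., 1, 0)} = (−1)^{n−j−1} · W_f · a_{n−j}, where the multi-index consists of n followed by the integers n−1 down to 0 with j omitted. -/
import Mathlib


open Matrix

/-- Noncommutative complete Bell polynomials: `B_0 = I_n`,
`B_{m+1}(X_1,…,X_{m+1}) = ∑_{j=0}^m C(m,j) B_j(X_1,…,X_j) X_{m+1-j}`.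
Here `X : Fin m → _` with `X i` playing the role of `X_{i+1}`. -/
noncomputable def Bell {n : ℕ} :
    (m : ℕ) → (Fin m → Matrix (Fin n) (Fin n) ℝ) → Matrix (Fin n) (Fin n) ℝ
  | 0, _ => 1
  | m + 1, X => ∑ j : Fin (m + 1),
      (Nat.choose m (j : ℕ) : ℝ) •
        (Bell (j : ℕ) (fun i : Fin (j : ℕ) => X (Fin.castLE (by omega) i)) *
          X ⟨m - (j : ℕ), by omega⟩)

/-- Entrywise `k`-th derivative (within `I`) of a matrix-valued function. -/
noncomputable def matD {n : ℕ} (I : Set ℝ) (X : ℝ → Matrix (Fin n) (Fin n) ℝ) (k : ℕ)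
    (x : ℝ) : Matrix (Fin n) (Fin n) ℝ :=
  Matrix.of fun p q => iteratedDerivWithin k (fun t => X t p q) I x

/-- `B_j(X, X', …, X^{(j-1)})` evaluated at `x` (derivatives within `I`). -/
noncomputable def BellD {n : ℕ} (I : Set ℝ) (X : ℝ → Matrix (Fin n) (Fin n) ℝ) (j : ℕ)
    (x : ℝ) : Matrix (Fin n) (Fin n) ℝ :=
  Bell j (fun i : Fin j => matD I X (i : ℕ) x)

/-- Generalized Wronskian `W_f^k = det(f^{(k_1)} | … | f^{(k_n)})` (derivatives within `I`). -/
noncomputable def genW {n : ℕ} (I : Set ℝ) (f : ℝ → Fin n → ℝ) (k : Fin n → ℕ) (x : ℝ) : ℝ :=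
  Matrix.det (Matrix.of fun p q => iteratedDerivWithin (k q) (fun t => f t p) I x)

/-- The multi-index `(n-1, n-2, …, 1, 0)` of the ordinary Wronskian. -/
def wIdx (n : ℕ) : Fin n → ℕ := fun q => n - 1 - (q : ℕ)

/-- The multi-index `(n+d, n-1, …, j+1, j-1, …, 1, 0)`. -/
def dIdx (n d j : ℕ) : Fin n → ℕ :=
  fun q => if (q : ℕ) = 0 then n + d
    else if j < n - (q : ℕ) then n - (q : ℕ) else n - (q : ℕ) - 1

/-- `Φ_f^{[j]} = (-1)^{n-j-1} W_f^{(n,n-1,…,j+1,j-1,…,0)} / W_f`. -/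
noncomputable def Phi {n : ℕ} (I : Set ℝ) (f : ℝ → Fin n → ℝ) (j : ℕ) (x : ℝ) : ℝ :=
  (-1 : ℝ) ^ (n - j - 1) * genW I f (dIdx n 0 j) x / genW I f (wIdx n) x

/-- The `1`-indexed standard basis vector `e_i` of `ℝ^n`. -/
def stdB (n i : ℕ) : Fin n → ℝ := fun p => if (p : ℕ) + 1 = i then 1 else 0

/-- The matrix `X_a = (a | e_1 | … | e_{n-1})`. -/
def colMat {n : ℕ} (a : ℝ → Fin n → ℝ) (x : ℝ) : Matrix (Fin n) (Fin n) ℝ :=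
  Matrix.of fun p q =>
    if (q : ℕ) = 0 then a x p else if (p : ℕ) + 1 = (q : ℕ) then 1 else 0

/-- The matrix `Y_f = (f^{(n-1)} | … | f' | f)` (derivatives within `I`). -/
noncomputable def Yfun {n : ℕ} (I : Set ℝ) (f : ℝ → Fin n → ℝ) (x : ℝ) :
    Matrix (Fin n) (Fin n) ℝ :=
  Matrix.of fun p q => iteratedDerivWithin (n - 1 - (q : ℕ)) (fun t => f t p) I x

/-- The `1`-indexed component `a_i` of `a : I → ℝ^n`, with `a_i := 0` for `i > n`. -/
noncomputable def aExt {n : ℕ} (a : ℝ → Fin n → ℝ) (i : ℕ) : ℝ → ℝ :=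
  fun t => if h : i - 1 < n then a t ⟨i - 1, h⟩ else 0

/-- `y` is an `n`-times differentiable (on `I`) solution of
`y^{(n)} = a_1 y^{(n-1)} + ⋯ + a_n y`, where `a i` is `a_{i+1}`. -/
def SolvesDE {n : ℕ} (I : Set ℝ) (a : ℝ → Fin n → ℝ) (y : ℝ → ℝ) : Prop :=
  (∀ k < n, DifferentiableOn ℝ (iteratedDerivWithin k y I) I) ∧
    ∀ x ∈ I, iteratedDerivWithin n y I x =
      ∑ i : Fin n, a x i * iteratedDerivWithin (n - 1 - (i : ℕ)) y I x

/-- `f : I → ℝ^n` is a fundamental system of solutions of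
`y^{(n)} = a_1 y^{(n-1)} + ⋯ + a_n y`: each component solves the equation and the
components are linearly independent functions on `I`. -/
def FundSystem {n : ℕ} (I : Set ℝ) (a : ℝ → Fin n → ℝ) (f : ℝ → Fin n → ℝ) : Prop :=
  (∀ p : Fin n, SolvesDE I a fun t => f t p) ∧
    LinearIndependent ℝ fun p : Fin n => I.restrict fun t => f t p

/-- for a fundamental system `f` of `y^{(n)} = a_1 y^{(n-1)} + ⋯ + a_n y`,
`W_f^{(n,n-1,…,j+1,j-1,…,0)} = (-1)^{n-j-1} W_f a_{n-j}` on `I` for `0 ≤ j ≤ n-1`. -/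
theorem stmt_7 (n : ℕ) (hn : 0 < n) (I : Set ℝ) (hIo : IsOpen I) (hIne : I.Nonempty)
    (hIc : I.OrdConnected) (a f : ℝ → Fin n → ℝ)
    (ha : ∀ i : Fin n, ContinuousOn (fun t => a t i) I)
    (hf : FundSystem I a f) :
    ∀ j < n, ∀ x ∈ I,
      genW I f (dIdx n 0 j) x =
        (-1 : ℝ) ^ (n - j - 1) * genW I f (wIdx n) x * aExt a (n - j) x := by
  obtain ⟨N, rfl⟩ : ∃ N, n = N + 1 := ⟨n - 1, by omega⟩
  intro j hj x hx
  have hjN : j ≤ N := by omega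
  set m' : Fin (N + 1) := ⟨N - j, by omega⟩ with hm'
  set e : Equiv.Perm (Fin (N + 1)) := Fin.cycleRange m' with he
  set Aord : Fin (N + 1) → ℕ :=
    (fun q => if (q : ℕ) = 0 then j else dIdx (N + 1) 0 j q) with hAord
  set A : Matrix (Fin (N + 1)) (Fin (N + 1)) ℝ :=
    Matrix.of (fun p q => iteratedDerivWithin (Aord q) (fun t => f t p) I x) with hA
  have key : ∀ q : Fin (N + 1), Aord (e q) = N - (q : ℕ) := by
    intro q
    have hqN : (q : ℕ) ≤ N := by omega
    rcases lt_trichotomy q m' with h | h | h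
    · have hcc : ((e q : Fin (N + 1)) : ℕ) = (q : ℕ) + 1 := Fin.coe_cycleRange_of_lt h
      have hq : (q : ℕ) < N - j := by simpa [hm', Fin.lt_def] using h
      simp only [hAord, dIdx]
      split_ifs <;> omega
    · have hcc : e q = 0 := Fin.cycleRange_of_eq h
      have hq : (q : ℕ) = N - j := by simpa [hm', Fin.ext_iff] using h
      have hcc' : ((e q : Fin (N + 1)) : ℕ) = 0 := by rw [hcc]; rfl
      simp only [hAord, dIdx]
      split_ifs <;> omega
    · have hcc : e q = q := Fin.cycleRange_of_gt h
      have hq : N - j < (q : ℕ) := by simpa [hm', Fin.lt_def] using h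
      have hcc' : ((e q : Fin (N + 1)) : ℕ) = (q : ℕ) := by rw [hcc]
      simp only [hAord, dIdx]
      split_ifs <;> omega
  have hW : (Matrix.of fun p q =>
      iteratedDerivWithin (wIdx (N + 1) q) (fun t => f t p) I x) = A.submatrix id e := by
    ext p q
    have hw : wIdx (N + 1) q = N - (q : ℕ) := by simp only [wIdx]; omega
    simp only [Matrix.submatrix_apply, hA, Matrix.of_apply, id_eq, key q, hw]
  have hsq : ((-1 : ℝ) ^ (N - j)) * ((-1 : ℝ) ^ (N - j)) = 1 := by
    rw [← pow_add, ← two_mul, pow_mul, neg_one_sq, one_pow]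
  have hdetA : A.det = (-1 : ℝ) ^ (N - j) * genW I f (wIdx (N + 1)) x := by
    have h1 : genW I f (wIdx (N + 1)) x = ((Equiv.Perm.sign e : ℤ) : ℝ) * A.det := by
      rw [genW, hW, Matrix.det_permute']
    have hs : ((Equiv.Perm.sign e : ℤ) : ℝ) = (-1 : ℝ) ^ (N - j) := by
      rw [he, Fin.sign_cycleRange]; push_cast; rfl
    rw [hs] at h1
    rw [h1, ← mul_assoc, hsq, one_mul]
  set c : Fin (N + 1) → ℝ := fun q => a x (e.symm q) with hc
  set M : Matrix (Fin (N + 1)) (Fin (N + 1)) ℝ :=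
    Matrix.of (fun p q => iteratedDerivWithin (dIdx (N + 1) 0 j q) (fun t => f t p) I x) with hMdef
  have hM : M = A.updateCol 0 (fun k => ∑ i, c i • A k i) := by
    ext p q
    rcases eq_or_ne q 0 with rfl | hq
    · rw [Matrix.updateCol_apply, if_pos rfl]
      have h0 : dIdx (N + 1) 0 j 0 = N + 1 := by simp [dIdx]
      have hODE := (hf.1 p).2 x hx
      have hsum : ∑ i, c i • A p i =
          ∑ i : Fin (N + 1), a x i * iteratedDerivWithin (N + 1 - 1 - (i : ℕ))
            (fun t => f t p) I x := by
        rw [← Equiv.sum_comp e (fun i => c i • A p i)]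
        refine Finset.sum_congr rfl fun i _ => ?_
        rw [hc]
        simp only [Equiv.symm_apply_apply, smul_eq_mul, hA, Matrix.of_apply, key i]
        congr 2 <;> omega
      rw [hsum, ← hODE]
      simp only [hMdef, Matrix.of_apply, h0]
    · rw [Matrix.updateCol_apply, if_neg hq]
      have hq0 : (q : ℕ) ≠ 0 := fun h => hq (Fin.ext h)
      simp only [hMdef, hA, Matrix.of_apply, hAord, if_neg hq0]
  have hgoal : genW I f (dIdx (N + 1) 0 j) x = M.det := rfl
  rw [hgoal, hM, Matrix.det_updateCol_sum]
  have hc0 : c 0 = a x m' := by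
    have hs0 : e.symm 0 = m' := by
      rw [Equiv.symm_apply_eq, he]
      exact (Fin.cycleRange_of_eq rfl).symm
    simp only [hc, hs0]
  have haext : aExt a (N + 1 - j) x = a x m' := by
    rw [aExt]
    rw [dif_pos (by omega : N + 1 - j - 1 < N + 1)]
    congr 1
    exact Fin.ext (by simp [hm']; omega)
  have hexp : N + 1 - j - 1 = N - j := by omega
  rw [hc0, hdetA, haext, hexp, smul_eq_mul]
  ring
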